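/- arXiv:math/0701541 — 4 statements merged into one kernel-verified Lean document; each statement's English description precedes it below -/
import Mathlib

section
/- Let s ∈ (0,1), let I : E_A^∞ → ℝ be Hölder continuous with I(ω) ≥ −log s for all ω, and let J : E_A^∞ → ℝ^d be bounded and Hölder continuous. If E_A^∞ is nonempty and finitely irreducible, then every α ∈ K is a limit of ratios coming from periodic points: K ⊆ closure{ S_pJ(x)/S_pI(x) : p ≥ 1, x ∈ E_A^∞ with σ^p(x) = x }, where K := {α ∈ ℝ^d : there exists ω ∈ E_A^∞ with lim_{n→∞} S_nJ(ω)/S_nI(ω) = α}. -/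
open MeasureTheory Filter Topology
open scoped ENNReal

/-- The one-sided subshift `E_A^∞` over the alphabet `E` with incidence matrix `A`. -/
abbrev Subshift (E : Type*) (A : E → E → Bool) : Type _ :=
  {ω : ℕ → E // ∀ i : ℕ, A (ω i) (ω (i + 1)) = true}

/-- The left shift map `σ` on `E_A^∞`. -/
def shiftMap {E : Type*} {A : E → E → Bool} (ω : Subshift E A) : Subshift E A :=
  ⟨fun i => ω.1 (i + 1), fun i => ω.2 (i + 1)⟩

/-- The `n`-th Birkhoff sum `S_n f = ∑_{k=0}^{n-1} f ∘ σ^k`. -/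
noncomputable def birkSum {E : Type*} {A : E → E → Bool} {X : Type*} [AddCommMonoid X]
    (f : Subshift E A → X) (n : ℕ) (ω : Subshift E A) : X :=
  ∑ k ∈ Finset.range n, f (shiftMap^[k] ω)

/-- `f` is Hölder continuous with exponent `a > 0`:
`sup_{n ≥ 1} sup { ‖f ω - f τ‖ e^{a(n-1)} : ω, τ agree in their first n coordinates } < ∞`. -/
def IsHolder {E : Type*} {A : E → E → Bool} {X : Type*} [SeminormedAddGroup X]
    (f : Subshift E A → X) (a : ℝ) : Prop :=
  ∃ v : ℝ, ∀ n : ℕ, 1 ≤ n → ∀ ω τ : Subshift E A,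
    (∀ i < n, ω.1 i = τ.1 i) → ‖f ω - f τ‖ * Real.exp (a * ((n : ℝ) - 1)) ≤ v

/-- `E_A^∞` is finitely irreducible: there is a finite set `W` of admissible words such that
any two letters can be joined by a word from `W`. -/
def FinitelyIrreducible {E : Type*} (A : E → E → Bool) : Prop :=
  ∃ W : Finset (List E), ∀ a b : E,
    ∃ w ∈ W, List.Chain' (fun x y => A x y = true) (a :: (w ++ [b]))

lemma shift_iter {E : Type*} {A : E → E → Bool} (ω : Subshift E A) (k i : ℕ) :
    (shiftMap^[k] ω).1 i = ω.1 (i + k) := by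
  induction k generalizing ω i with
  | zero => rfl
  | succ k ih => rw [Function.iterate_succ_apply, ih]; rfl

lemma periodic_point {E : Type*} (A : E → E → Bool) (L : List E) (hL : 0 < L.length)
    (hc : List.Chain' (fun x y => A x y = true) (L ++ [L.get ⟨0, hL⟩])) :
    ∃ y : Subshift E A, (∀ i, y.1 i = L.get ⟨i % L.length, Nat.mod_lt i hL⟩) ∧
      shiftMap^[L.length] y = y := by
  set p := L.length with hp
  have hadm : ∀ i (hi : i < p), A (L.get ⟨i, hi⟩) (L.get ⟨(i+1) % p, Nat.mod_lt _ hL⟩) = true := by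
    intro i hi
    have hlen : (L ++ [L.get ⟨0, hL⟩]).length = p + 1 := by simp [hp]
    have h := List.isChain_iff_getElem.mp hc i (by simp; omega)
    have e1 : (L ++ [L.get ⟨0, hL⟩]).get ⟨i, by omega⟩ = L.get ⟨i, hi⟩ := by
      simp [List.getElem_append_left hi]
    rcases Nat.lt_or_ge (i+1) p with h2 | h2
    · have e2 : (L ++ [L.get ⟨0, hL⟩]).get ⟨i+1, by omega⟩ = L.get ⟨i+1, h2⟩ := by
        simp [List.getElem_append_left h2]
      have : (i+1) % p = i+1 := Nat.mod_eq_of_lt h2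
      simp only [List.get_eq_getElem] at h e1 e2 ⊢
      rw [e1, e2] at h
      convert h using 3
    · have hip : i + 1 = p := by omega
      have e2 : (L ++ [L.get ⟨0, hL⟩]).get ⟨i+1, by omega⟩ = L.get ⟨0, hL⟩ := by
        simp only [List.get_eq_getElem]
        rw [List.getElem_append_right (by omega)]
        simp [hip]
      have : (i+1) % p = 0 := by rw [hip]; exact Nat.mod_self p
      simp only [List.get_eq_getElem] at h e1 e2 ⊢
      rw [e1, e2] at h
      convert h using 3
  refine ⟨⟨fun i => L.get ⟨i % p, Nat.mod_lt i hL⟩, ?_⟩, fun i => rfl, ?_⟩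
  · intro i
    have h := hadm (i % p) (Nat.mod_lt i hL)
    simpa only [Nat.mod_add_mod] using h
  · apply Subtype.ext
    funext i
    rw [shift_iter]
    show L.get ⟨(i + p) % p, _⟩ = L.get ⟨i % p, _⟩
    congr 1
    simp [Nat.add_mod_right]

theorem mygeom (r : ℝ) (h0 : 0 ≤ r) (h1 : r < 1) (n : ℕ) :
    ∑ k ∈ Finset.range n, r^k ≤ (1-r)⁻¹ := by
  have hne : r ≠ 1 := ne_of_lt h1
  have h2 : (0:ℝ) < 1 - r := by linarith
  have : ∑ k ∈ Finset.range n, r^k = (1 - r^n)/(1-r) := by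
    rw [geom_sum_eq hne]; rw [← neg_div_neg_eq]; ring_nf
  rw [this, inv_eq_one_div, div_le_div_iff₀ h2 h2]
  nlinarith [pow_nonneg h0 n]

lemma birk_dist {E : Type*} {A : E → E → Bool} {X : Type*} [SeminormedAddCommGroup X]
    (f : Subshift E A → X) (a v : ℝ) (ha : 0 < a) (hv0 : 0 ≤ v)
    (hf : ∀ n : ℕ, 1 ≤ n → ∀ ω τ : Subshift E A,
      (∀ i < n, ω.1 i = τ.1 i) → ‖f ω - f τ‖ * Real.exp (a * ((n : ℝ) - 1)) ≤ v)
    (n : ℕ) (ω τ : Subshift E A) (hagree : ∀ i < n, ω.1 i = τ.1 i) :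
    ‖birkSum f n ω - birkSum f n τ‖ ≤ v * (1 - Real.exp (-a))⁻¹ := by
  set r := Real.exp (-a) with hr
  have hr0 : 0 ≤ r := Real.exp_nonneg _
  have hr1 : r < 1 := Real.exp_lt_one_iff.mpr (by linarith)
  have hterm : ∀ k ∈ Finset.range n,
      ‖f (shiftMap^[k] ω) - f (shiftMap^[k] τ)‖ ≤ v * r ^ (n - 1 - k) := by
    intro k hk
    rw [Finset.mem_range] at hk
    have hm : 1 ≤ n - k := by omega
    have hag : ∀ i < n - k, (shiftMap^[k] ω).1 i = (shiftMap^[k] τ).1 i := by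
      intro i hi
      rw [shift_iter, shift_iter]
      exact hagree (i + k) (by omega)
    have h := hf (n - k) hm _ _ hag
    have hcast : ((n - k : ℕ) : ℝ) - 1 = ((n - 1 - k : ℕ) : ℝ) := by
      have : (n - 1 - k : ℕ) = n - k - 1 := by omega
      rw [this, Nat.cast_sub hm, Nat.cast_sub (by omega : k ≤ n)]
      push_cast; ring
    rw [hcast] at h
    have hexp : Real.exp (a * ((n - 1 - k : ℕ) : ℝ)) = (Real.exp a) ^ (n - 1 - k) := by
      rw [mul_comm, Real.exp_nat_mul]
    rw [hexp] at h
    have hpos : (0:ℝ) < (Real.exp a) ^ (n - 1 - k) := pow_pos (Real.exp_pos a) _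
    rw [← le_div_iff₀ hpos] at h
    calc ‖f (shiftMap^[k] ω) - f (shiftMap^[k] τ)‖ ≤ v / (Real.exp a) ^ (n-1-k) := h
      _ = v * r ^ (n-1-k) := by
          rw [div_eq_mul_inv, ← inv_pow, hr, ← Real.exp_neg]
  have hsub : birkSum f n ω - birkSum f n τ
      = ∑ k ∈ Finset.range n, (f (shiftMap^[k] ω) - f (shiftMap^[k] τ)) := by
    rw [birkSum, birkSum, Finset.sum_sub_distrib]
  rw [hsub]
  calc ‖∑ k ∈ Finset.range n, (f (shiftMap^[k] ω) - f (shiftMap^[k] τ))‖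
      ≤ ∑ k ∈ Finset.range n, ‖f (shiftMap^[k] ω) - f (shiftMap^[k] τ)‖ :=
        norm_sum_le _ _
    _ ≤ ∑ k ∈ Finset.range n, v * r ^ (n - 1 - k) := Finset.sum_le_sum hterm
    _ = v * ∑ k ∈ Finset.range n, r ^ (n - 1 - k) := by rw [Finset.mul_sum]
    _ = v * ∑ k ∈ Finset.range n, r ^ k := by
        rw [Finset.sum_range_reflect (fun k => r ^ k) n]
    _ ≤ v * (1 - r)⁻¹ := mul_le_mul_of_nonneg_left (mygeom r hr0 hr1 n) hv0

/-- every `α ∈ K` is a limit of Birkhoff-ratio values at periodic points. -/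
theorem K_subset_closure_periodic {E : Type*} [Countable E] (A : E → E → Bool) (d : ℕ)
    (hne : Nonempty (Subshift E A)) (hfi : FinitelyIrreducible A)
    (s : ℝ) (hs : s ∈ Set.Ioo (0 : ℝ) 1)
    (I : Subshift E A → ℝ) (aI : ℝ) (haI : 0 < aI) (hIhold : IsHolder I aI)
    (hIlb : ∀ ω, -Real.log s ≤ I ω)
    (J : Subshift E A → EuclideanSpace ℝ (Fin d)) (aJ : ℝ) (haJ : 0 < aJ)
    (hJhold : IsHolder J aJ) (hJbdd : ∃ C : ℝ, ∀ ω, ‖J ω‖ ≤ C) :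
    {α : EuclideanSpace ℝ (Fin d) | ∃ ω : Subshift E A,
        Tendsto (fun n => (birkSum I n ω)⁻¹ • birkSum J n ω) atTop (𝓝 α)} ⊆
      closure {x : EuclideanSpace ℝ (Fin d) | ∃ p : ℕ, 1 ≤ p ∧ ∃ y : Subshift E A,
        shiftMap^[p] y = y ∧ x = (birkSum I p y)⁻¹ • birkSum J p y} := by
  classical
  obtain ⟨vI, hvI⟩ := hIhold
  obtain ⟨vJ, hvJ⟩ := hJhold
  obtain ⟨C, hC⟩ := hJbdd
  obtain ⟨W, hW⟩ := hfi
  obtain ⟨ω₀⟩ := hne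
  set S : Set (EuclideanSpace ℝ (Fin d)) :=
    {x | ∃ p : ℕ, 1 ≤ p ∧ ∃ y : Subshift E A,
      shiftMap^[p] y = y ∧ x = (birkSum I p y)⁻¹ • birkSum J p y} with hS
  have hvI0 : 0 ≤ vI := by
    have h := hvI 1 le_rfl ω₀ ω₀ (fun i _ => rfl)
    simpa using h
  have hvJ0 : 0 ≤ vJ := by
    have h := hvJ 1 le_rfl ω₀ ω₀ (fun i _ => rfl)
    simpa using h
  have hC0 : 0 ≤ C := le_trans (norm_nonneg _) (hC ω₀)
  set c : ℝ := -Real.log s with hcdef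
  have hc : 0 < c := by
    have := Real.log_neg hs.1 hs.2
    simp [hcdef]; linarith
  -- lower bound on Birkhoff sums of I
  have birk_lower : ∀ (τ : Subshift E A) (n : ℕ), (n : ℝ) * c ≤ birkSum I n τ := by
    intro τ n
    have h := Finset.card_nsmul_le_sum (Finset.range n)
      (fun k => I (shiftMap^[k] τ)) c (fun k _ => hIlb _)
    simpa [nsmul_eq_mul, Finset.card_range, birkSum] using h
  -- bound on I over points whose first letter appears in W
  set lettersW : Finset E := W.biUnion (fun w => w.toFinset) with hlW
  set g : E → ℝ := fun e =>
    if h : ∃ τ : Subshift E A, τ.1 0 = e then |I h.choose| else 0 with hg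
  have hg0 : ∀ e, 0 ≤ g e := by
    intro e
    simp only [hg]
    split
    · exact abs_nonneg _
    · exact le_refl 0
  set B : ℝ := vI + ∑ e ∈ lettersW, g e with hB
  have hB0 : 0 ≤ B := by
    have : 0 ≤ ∑ e ∈ lettersW, g e := Finset.sum_nonneg (fun e _ => hg0 e)
    simp [hB]; linarith
  have hBbound : ∀ τ : Subshift E A, τ.1 0 ∈ lettersW → |I τ| ≤ B := by
    intro τ hτ
    have hex : ∃ τ' : Subshift E A, τ'.1 0 = τ.1 0 := ⟨τ, rfl⟩
    have hge : g (τ.1 0) = |I hex.choose| := dif_pos hex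
    have h1 : |I τ - I hex.choose| ≤ vI := by
      have h := hvI 1 le_rfl τ hex.choose (fun i hi => by
        interval_cases i
        exact hex.choose_spec.symm)
      simpa [Real.norm_eq_abs] using h
    have h2 : g (τ.1 0) ≤ ∑ e ∈ lettersW, g e :=
      Finset.single_le_sum (fun e _ => hg0 e) hτ
    calc |I τ| = |(I τ - I hex.choose) + I hex.choose| := by ring_nf
      _ ≤ |I τ - I hex.choose| + |I hex.choose| := abs_add_le _ _
      _ ≤ vI + g (τ.1 0) := by rw [hge]; exact add_le_add h1 le_rfl
      _ ≤ B := by rw [hB]; exact add_le_add le_rfl h2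
  set M : ℕ := W.sup List.length with hM
  set HI : ℝ := vI * (1 - Real.exp (-aI))⁻¹ with hHI
  set HJ : ℝ := vJ * (1 - Real.exp (-aJ))⁻¹ with hHJ
  set KI : ℝ := HI + M * B with hKI
  set KJ : ℝ := HJ + M * C with hKJ
  set D : ℝ := KJ / c + KI * C / (c * c) with hD
  intro α hα
  obtain ⟨ω, hω⟩ := hα
  -- the key approximation
  have key : ∀ n : ℕ, ∃ x ∈ S,
      ‖x - ((birkSum I (n+1) ω)⁻¹ • birkSum J (n+1) ω)‖ ≤ D / (n+1) := by
    intro n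
    set N : ℕ := n + 1 with hN
    obtain ⟨w, hwW, hchain⟩ := hW (ω.1 n) (ω.1 0)
    set P : List E := List.ofFn (fun i : Fin N => ω.1 i) with hP
    set L : List E := P ++ w with hLdef
    have hPlen : P.length = N := by simp [hP, hN]
    have hLlen : L.length = N + w.length := by simp [hLdef, hPlen]
    have hL0 : 0 < L.length := by omega
    have hL0get : L.get ⟨0, hL0⟩ = ω.1 0 := by
      simp only [List.get_eq_getElem, hLdef]
      rw [List.getElem_append_left (by omega : 0 < P.length)]
      simp [hP]
    have hPchain : List.Chain' (fun x y => A x y = true) P := by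
      refine List.isChain_iff_getElem.mpr ?_
      intro i hi
      simp only [List.get_eq_getElem, hP, List.getElem_ofFn]
      exact ω.2 i
    have hcL : List.Chain' (fun x y => A x y = true) (L ++ [L.get ⟨0, hL0⟩]) := by
      rw [hL0get, hLdef, List.append_assoc]
      refine List.isChain_append.mpr ⟨hPchain, hchain.tail, ?_⟩
      intro x hx y hy
      have hxval : x = ω.1 n := by
        rw [List.getLast?_eq_getElem?] at hx
        rw [List.getElem?_eq_getElem (by omega : P.length - 1 < P.length)] at hx
        simp only [Option.mem_def, Option.some_inj] at hx
        rw [← hx]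
        simp only [hP, List.getElem_ofFn, List.length_ofFn]
        have hidx : N - 1 = n := by omega
        rw [hidx]
      rw [hxval]
      exact (List.isChain_cons.mp hchain).1 y hy
    obtain ⟨y, hycoord, hyper⟩ := periodic_point A L hL0 hcL
    set p : ℕ := L.length with hpdef
    set m : ℕ := w.length with hmdef
    have hpm : p = N + m := hLlen
    have hagree : ∀ i < N, y.1 i = ω.1 i := by
      intro i hi
      rw [hycoord i]
      simp only [List.get_eq_getElem]
      have h1 : i % p = i := Nat.mod_eq_of_lt (by omega)
      simp only [Nat.mod_eq_of_lt (show i < L.length by omega)]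
      simp only [hLdef]
      rw [List.getElem_append_left (by omega : i < P.length)]
      simp only [hP, List.getElem_ofFn]
    have hmM : m ≤ M := Finset.le_sup (f := List.length) hwW
    -- block letter membership
    have hblock : ∀ k < m, (shiftMap^[N + k] y).1 0 ∈ lettersW := by
      intro k hk
      rw [shift_iter]
      simp only [Nat.zero_add]
      rw [hycoord (N + k)]
      simp only [List.get_eq_getElem]
      have h1 : (N + k) % p = N + k := Nat.mod_eq_of_lt (by omega)
      simp only [Nat.mod_eq_of_lt (show N + k < L.length by omega)]
      simp only [hLdef]
      rw [List.getElem_append_right (by omega : P.length ≤ N + k)]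
      rw [hlW]
      apply Finset.mem_biUnion.mpr
      exact ⟨w, hwW, List.mem_toFinset.mpr (List.getElem_mem _)⟩
    -- Birkhoff sum splits
    have hsplitI : birkSum I p y = birkSum I N y
        + ∑ k ∈ Finset.range m, I (shiftMap^[N + k] y) := by
      rw [hpm]
      exact Finset.sum_range_add (fun k => I (shiftMap^[k] y)) N m
    have hsplitJ : birkSum J p y = birkSum J N y
        + ∑ k ∈ Finset.range m, J (shiftMap^[N + k] y) := by
      rw [hpm]
      exact Finset.sum_range_add (fun k => J (shiftMap^[k] y)) N m
    -- estimates
    have eI1 : |birkSum I N y - birkSum I N ω| ≤ HI := by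
      have h := birk_dist I aI vI haI hvI0 hvI N y ω hagree
      rwa [Real.norm_eq_abs] at h
    have eJ1 : ‖birkSum J N y - birkSum J N ω‖ ≤ HJ :=
      birk_dist J aJ vJ haJ hvJ0 hvJ N y ω hagree
    have eI2 : |∑ k ∈ Finset.range m, I (shiftMap^[N + k] y)| ≤ (M : ℝ) * B := by
      calc |∑ k ∈ Finset.range m, I (shiftMap^[N + k] y)|
          ≤ ∑ k ∈ Finset.range m, |I (shiftMap^[N + k] y)| :=
            Finset.abs_sum_le_sum_abs _ _
        _ ≤ ∑ k ∈ Finset.range m, B := Finset.sum_le_sum (fun k hk =>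
            hBbound _ (hblock k (Finset.mem_range.mp hk)))
        _ = (m : ℝ) * B := by rw [Finset.sum_const, Finset.card_range, nsmul_eq_mul]
        _ ≤ (M : ℝ) * B := mul_le_mul_of_nonneg_right (by exact_mod_cast hmM) hB0
    have eJ2 : ‖∑ k ∈ Finset.range m, J (shiftMap^[N + k] y)‖ ≤ (M : ℝ) * C := by
      calc ‖∑ k ∈ Finset.range m, J (shiftMap^[N + k] y)‖
          ≤ ∑ k ∈ Finset.range m, ‖J (shiftMap^[N + k] y)‖ := norm_sum_le _ _
        _ ≤ ∑ k ∈ Finset.range m, C := Finset.sum_le_sum (fun k _ => hC _)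
        _ = (m : ℝ) * C := by rw [Finset.sum_const, Finset.card_range, nsmul_eq_mul]
        _ ≤ (M : ℝ) * C := mul_le_mul_of_nonneg_right (by exact_mod_cast hmM) hC0
    have eI : |birkSum I p y - birkSum I N ω| ≤ KI := by
      rw [hsplitI]
      calc |birkSum I N y + ∑ k ∈ Finset.range m, I (shiftMap^[N + k] y) - birkSum I N ω|
          = |(birkSum I N y - birkSum I N ω) + ∑ k ∈ Finset.range m, I (shiftMap^[N+k] y)| := by
            congr 1; ring
        _ ≤ |birkSum I N y - birkSum I N ω| + |∑ k ∈ Finset.range m, I (shiftMap^[N+k] y)| :=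
            abs_add_le _ _
        _ ≤ HI + (M:ℝ) * B := add_le_add eI1 eI2
    have eJ : ‖birkSum J p y - birkSum J N ω‖ ≤ KJ := by
      rw [hsplitJ]
      calc ‖birkSum J N y + ∑ k ∈ Finset.range m, J (shiftMap^[N + k] y) - birkSum J N ω‖
          = ‖(birkSum J N y - birkSum J N ω) + ∑ k ∈ Finset.range m, J (shiftMap^[N+k] y)‖ := by
            congr 1; abel
        _ ≤ ‖birkSum J N y - birkSum J N ω‖ + ‖∑ k ∈ Finset.range m, J (shiftMap^[N+k] y)‖ :=
            norm_add_le _ _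
        _ ≤ HJ + (M:ℝ) * C := add_le_add eJ1 eJ2
    -- denominators
    have hNpos : (0:ℝ) < (N : ℝ) := by positivity
    have hNc : (0:ℝ) < (N : ℝ) * c := by positivity
    have hbI : (N : ℝ) * c ≤ birkSum I p y := by
      calc (N:ℝ) * c ≤ (p:ℝ) * c :=
            mul_le_mul_of_nonneg_right (by exact_mod_cast (by omega : N ≤ p)) hc.le
        _ ≤ birkSum I p y := birk_lower y p
    have haIω : (N : ℝ) * c ≤ birkSum I N ω := birk_lower ω N
    have hbIpos : 0 < birkSum I p y := lt_of_lt_of_le hNc hbI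
    have haIωpos : 0 < birkSum I N ω := lt_of_lt_of_le hNc haIω
    have hu : ‖birkSum J N ω‖ ≤ (N : ℝ) * C := by
      calc ‖birkSum J N ω‖ ≤ ∑ k ∈ Finset.range N, ‖J (shiftMap^[k] ω)‖ := norm_sum_le _ _
        _ ≤ ∑ k ∈ Finset.range N, C := Finset.sum_le_sum (fun k _ => hC _)
        _ = (N:ℝ) * C := by rw [Finset.sum_const, Finset.card_range, nsmul_eq_mul]
    refine ⟨(birkSum I p y)⁻¹ • birkSum J p y, ⟨p, by omega, y, hyper, rfl⟩, ?_⟩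
    set bI := birkSum I p y
    set aIω := birkSum I N ω
    set bJ := birkSum J p y
    set u := birkSum J N ω
    have hdecomp : bI⁻¹ • bJ - aIω⁻¹ • u = bI⁻¹ • (bJ - u) + (bI⁻¹ - aIω⁻¹) • u := by
      rw [smul_sub, sub_smul]; abel
    have hinv1 : bI⁻¹ ≤ ((N:ℝ) * c)⁻¹ := inv_anti₀ hNc hbI
    have hinv1' : 0 ≤ bI⁻¹ := inv_nonneg.mpr hbIpos.le
    have hdiff : |bI⁻¹ - aIω⁻¹| ≤ KI * (((N:ℝ)*c)⁻¹ * ((N:ℝ)*c)⁻¹) := by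
      have heq : bI⁻¹ - aIω⁻¹ = (aIω - bI) * (bI⁻¹ * aIω⁻¹) := by
        field_simp
      rw [heq, abs_mul, abs_mul]
      have h1 : |aIω - bI| ≤ KI := by
        have : aIω - bI = -(bI - aIω) := by ring
        rw [this, abs_neg]; exact eI
      have h2 : |bI⁻¹| ≤ ((N:ℝ)*c)⁻¹ := by
        rw [abs_of_nonneg hinv1']; exact hinv1
      have h3 : |aIω⁻¹| ≤ ((N:ℝ)*c)⁻¹ := by
        rw [abs_of_nonneg (inv_nonneg.mpr haIωpos.le)]
        exact inv_anti₀ hNc haIω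
      have hKI0 : 0 ≤ KI := le_trans (abs_nonneg _) h1
      apply mul_le_mul h1 (mul_le_mul h2 h3 (abs_nonneg _) (by positivity))
        (mul_nonneg (abs_nonneg _) (abs_nonneg _)) hKI0
    have hKJ0 : 0 ≤ KJ := le_trans (norm_nonneg _) eJ
    have hKI0' : 0 ≤ KI := le_trans (abs_nonneg _) eI
    calc ‖bI⁻¹ • bJ - aIω⁻¹ • u‖
        ≤ ‖bI⁻¹ • (bJ - u)‖ + ‖(bI⁻¹ - aIω⁻¹) • u‖ := by rw [hdecomp]; exact norm_add_le _ _
      _ = |bI⁻¹| * ‖bJ - u‖ + |bI⁻¹ - aIω⁻¹| * ‖u‖ := by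
          rw [norm_smul, norm_smul, Real.norm_eq_abs, Real.norm_eq_abs]
      _ ≤ ((N:ℝ)*c)⁻¹ * KJ + (KI * (((N:ℝ)*c)⁻¹ * ((N:ℝ)*c)⁻¹)) * ((N:ℝ) * C) := by
          apply add_le_add
          · apply mul_le_mul (by rw [abs_of_nonneg hinv1']; exact hinv1) eJ
              (norm_nonneg _) (by positivity)
          · apply mul_le_mul hdiff hu (norm_nonneg _)
              (mul_nonneg hKI0' (by positivity))
      _ = D / (N : ℝ) := by
          rw [hD]
          field_simp
      _ = D / ((n:ℝ)+1) := by norm_num [hN]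
  -- extract the approximating sequence and pass to the limit
  choose x hxS hxb using key
  have hr : Tendsto (fun n : ℕ => (birkSum I (n+1) ω)⁻¹ • birkSum J (n+1) ω) atTop (𝓝 α) :=
    hω.comp (tendsto_add_atTop_nat 1)
  have hgz : Tendsto (fun n : ℕ => D / ((n:ℝ)+1)) atTop (𝓝 0) := by
    have h := (tendsto_const_div_atTop_nhds_zero_nat D).comp (tendsto_add_atTop_nat 1)
    have heq : (fun n : ℕ => D / ((n:ℝ)+1)) = (fun n : ℕ => D / (((n+1:ℕ)):ℝ)) := by
      funext n; push_cast; ring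
    rw [heq]
    exact h
  have h0 : Tendsto (fun n : ℕ => x n - (birkSum I (n+1) ω)⁻¹ • birkSum J (n+1) ω)
      atTop (𝓝 0) := by
    apply squeeze_zero_norm _ hgz
    intro n
    exact_mod_cast hxb n
  have hx : Tendsto x atTop (𝓝 α) := by
    have := h0.add hr
    simpa using this
  exact mem_closure_of_tendsto hx (Eventually.of_forall hxS)
end

section
/- Let V be a finite set of vertices and i, t : E → V maps with the property that A(a,b) = 1 implies t(a) = i(b). Let s ∈ (0,1), let I : E_A^∞ → ℝ be Hölder continuous with I(ω) ≥ −log s for all ω, and let J : E_A^∞ → ℝ^d be bounded and Hölder continuous. Assume E_A^∞ is nonempty and finitely irreducible, and let v ∈ V be a vertex such that there exists ω ∈ E_A^∞ with i(ω_1) = v. Then {α ∈ ℝ^d : there exists ω ∈ E_A^∞ with i(ω_1) = v and lim_{n→∞} S_nJ(ω)/S_nI(ω) = α} = K, where K := {α ∈ ℝ^d : there exists ω ∈ E_A^∞ with lim_{n→∞} S_nJ(ω)/S_nI(ω) = α}. -/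
open MeasureTheory Filter Topology
open scoped ENNReal

section Aux

variable {E : Type*} {A : E → E → Bool}

lemma shift_iter_apply (ω : Subshift E A) (k i : ℕ) :
    (shiftMap^[k] ω).1 i = ω.1 (i + k) := by
  induction k generalizing ω with
  | zero => rfl
  | succ k ih =>
      rw [Function.iterate_succ_apply, ih]; rfl

/-- Glue a nonempty list `p` in front of `ω`. -/
noncomputable def glue (p : List E) (ω : Subshift E A)
    (hch : List.Chain' (fun x y => A x y = true) (p ++ [ω.1 0])) : Subshift E A := by
  refine ⟨fun i => if h : i < p.length then p.get ⟨i, h⟩ else ω.1 (i - p.length), ?_⟩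
  intro i
  change List.IsChain _ _ at hch; rw [List.isChain_iff_getElem] at hch
  have hlen : (p ++ [ω.1 0]).length = p.length + 1 := by simp
  by_cases h1 : i + 1 < p.length
  · have h0 : i < p.length := by omega
    simp only [dif_pos h0, dif_pos h1]
    have := hch i (by omega)
    simp only [List.get_eq_getElem] at this ⊢
    rwa [List.getElem_append_left h0, List.getElem_append_left h1] at this
  · by_cases h2 : i < p.length
    · have h3 : i + 1 = p.length := by omega
      simp only [dif_pos h2, dif_neg h1]
      have := hch i (by omega)
      simp only [List.get_eq_getElem] at this ⊢
      rw [List.getElem_append_left h2,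
        List.getElem_append_right (by omega : p.length ≤ i + 1)] at this
      simpa [show i + 1 - p.length = 0 by omega] using this
    · simp only [dif_neg h2, dif_neg h1]
      have := ω.2 (i - p.length)
      have e : i + 1 - p.length = (i - p.length) + 1 := by omega
      rw [e]; exact this

lemma glue_shift (p : List E) (ω : Subshift E A)
    (hch : List.Chain' (fun x y => A x y = true) (p ++ [ω.1 0])) :
    shiftMap^[p.length] (glue p ω hch) = ω := by
  apply Subtype.ext
  funext i
  rw [shift_iter_apply]
  simp [glue, Nat.add_sub_cancel]

lemma glue_head (p : List E) (ω : Subshift E A) (hp : p ≠ [])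
    (hch : List.Chain' (fun x y => A x y = true) (p ++ [ω.1 0])) :
    (glue p ω hch).1 0 = p.get ⟨0, by cases p <;> simp_all⟩ := by
  have hl : 0 < p.length := by cases p <;> simp_all
  simp [glue, hl]

end Aux

/-- for any vertex `v` seen by some point of `E_A^∞`, the level-value set
computed with the restriction `i(ω₁) = v` equals the full set `K`. -/
theorem levelValueSet_vertex_eq_K {E V : Type*} [Countable E] [Finite V]
    (A : E → E → Bool) (ini ter : E → V)
    (hmat : ∀ a b : E, A a b = true → ter a = ini b) (d : ℕ)
    (hne : Nonempty (Subshift E A)) (hfi : FinitelyIrreducible A)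
    (s : ℝ) (hs : s ∈ Set.Ioo (0 : ℝ) 1)
    (I : Subshift E A → ℝ) (aI : ℝ) (haI : 0 < aI) (hIhold : IsHolder I aI)
    (hIlb : ∀ ω, -Real.log s ≤ I ω)
    (J : Subshift E A → EuclideanSpace ℝ (Fin d)) (aJ : ℝ) (haJ : 0 < aJ)
    (hJhold : IsHolder J aJ) (hJbdd : ∃ C : ℝ, ∀ ω, ‖J ω‖ ≤ C)
    (v : V) (hv : ∃ ω : Subshift E A, ini (ω.1 0) = v) :
    {α : EuclideanSpace ℝ (Fin d) | ∃ ω : Subshift E A, ini (ω.1 0) = v ∧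
        Tendsto (fun n => (birkSum I n ω)⁻¹ • birkSum J n ω) atTop (𝓝 α)} =
      {α : EuclideanSpace ℝ (Fin d) | ∃ ω : Subshift E A,
        Tendsto (fun n => (birkSum I n ω)⁻¹ • birkSum J n ω) atTop (𝓝 α)} := by
  apply Set.Subset.antisymm
  · rintro α ⟨ω, -, hω⟩; exact ⟨ω, hω⟩
  rintro α ⟨ω, hω⟩
  obtain ⟨τ, hτ⟩ := hv
  obtain ⟨W, hW⟩ := hfi
  obtain ⟨w, -, hch⟩ := hW (τ.1 0) (ω.1 0)
  set p : List E := τ.1 0 :: w with hp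
  have hch' : List.Chain' (fun x y => A x y = true) (p ++ [ω.1 0]) := by
    simpa [hp] using hch
  set ω' : Subshift E A := glue p ω hch' with hω'
  set m : ℕ := p.length with hm
  have hshift : shiftMap^[m] ω' = ω := glue_shift p ω hch'
  have hhead : ini (ω'.1 0) = v := by
    have := glue_head p ω (by simp [hp]) hch'
    rw [hω', this]; simpa [hp] using hτ
  -- Birkhoff sum decomposition
  have hdec : ∀ (X : Type) (_ : AddCommMonoid X) (f : Subshift E A → X) (k : ℕ),
      birkSum f (m + k) ω' = birkSum f m ω' + birkSum f k ω := by
    intro X _ f k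
    rw [birkSum, Finset.sum_range_add]
    congr 1
    refine Finset.sum_congr rfl fun j _ => ?_
    rw [Nat.add_comm m j, Function.iterate_add_apply, hshift]
  set c : ℝ := -Real.log s with hc
  have hcpos : 0 < c := by
    rw [hc]; simpa using Real.log_neg hs.1 hs.2
  set SI : ℕ → ℝ := fun k => birkSum I k ω with hSI
  set SJ : ℕ → EuclideanSpace ℝ (Fin d) := fun k => birkSum J k ω with hSJ
  have hSIlb : ∀ k : ℕ, (k : ℝ) * c ≤ SI k := by
    intro k
    calc (k : ℝ) * c = ∑ _j ∈ Finset.range k, c := by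
          simp [Finset.sum_const, mul_comm]
      _ ≤ SI k := Finset.sum_le_sum fun j _ => hIlb _
  have hSItop : Tendsto SI atTop atTop := by
    refine tendsto_atTop_mono hSIlb ?_
    exact (tendsto_natCast_atTop_atTop (R := ℝ)).atTop_mul_const hcpos
  set CI : ℝ := birkSum I m ω' with hCI
  set CJ : EuclideanSpace ℝ (Fin d) := birkSum J m ω' with hCJ
  have htop : Tendsto (fun k => CI + SI k) atTop atTop :=
    tendsto_atTop_add_const_left atTop CI hSItop
  have hφ : Tendsto (fun k => (CI + SI k)⁻¹) atTop (𝓝 0) :=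
    htop.inv_tendsto_atTop
  have h1 : Tendsto (fun k => (CI + SI k)⁻¹ • CJ) atTop (𝓝 ((0:ℝ) • CJ)) :=
    hφ.smul_const CJ
  have h2 : Tendsto (fun k => (1 - CI * (CI + SI k)⁻¹) • ((SI k)⁻¹ • SJ k)) atTop
      (𝓝 ((1 - CI * 0) • α)) :=
    (tendsto_const_nhds.sub (hφ.const_mul CI)).smul hω
  have hev : ∀ᶠ k in atTop, (CI + SI k)⁻¹ • CJ + (1 - CI * (CI + SI k)⁻¹) • ((SI k)⁻¹ • SJ k)
      = (CI + SI k)⁻¹ • (CJ + SJ k) := by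
    have hev1 : ∀ᶠ k in atTop, c ≤ SI k := by
      filter_upwards [Filter.eventually_ge_atTop 1] with k hk
      calc c = (1:ℝ) * c := (one_mul c).symm
        _ ≤ (k:ℝ) * c := by
            apply mul_le_mul_of_nonneg_right _ hcpos.le
            exact_mod_cast hk
        _ ≤ SI k := hSIlb k
    have hev2 : ∀ᶠ k in atTop, (0:ℝ) < CI + SI k := htop.eventually_gt_atTop 0
    filter_upwards [hev1, hev2] with k hk1 hk2
    have hSIne : SI k ≠ 0 := ne_of_gt (lt_of_lt_of_le hcpos hk1)
    have hne2 : CI + SI k ≠ 0 := ne_of_gt hk2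
    have : (1 - CI * (CI + SI k)⁻¹) = (CI + SI k)⁻¹ * SI k := by
      field_simp
      ring
    rw [this, smul_smul, mul_assoc, mul_inv_cancel₀ hSIne, mul_one, smul_add]
  have hlim : Tendsto (fun k => (CI + SI k)⁻¹ • (CJ + SJ k)) atTop (𝓝 α) := by
    have := (h1.add h2).congr' hev
    simpa using this
  have hkey : Tendsto (fun k => (birkSum I (k + m) ω')⁻¹ • birkSum J (k + m) ω')
      atTop (𝓝 α) := by
    refine hlim.congr fun k => ?_
    rw [show k + m = m + k from Nat.add_comm k m, hdec _ _ I k, hdec _ _ J k]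
  exact ⟨ω', hhead, (tendsto_add_atTop_iff_nat m).mp hkey⟩
end

section
/- Let I : E_A^∞ → [0,∞) be a Borel measurable function such that inf{ I(ω) : ω ∈ E_A^∞, ω_1 ≥ ℓ } → ∞ as ℓ → ∞. Then any family M of σ-invariant Borel probability measures on E_A^∞ with sup_{μ∈M} ∫ I dμ < ∞ is tight: for every ε > 0 there is a compact set C ⊆ E_A^∞ with μ(E_A^∞ \ C) ≤ ε for all μ ∈ M. -/
open MeasureTheory Filter Topology
open scoped ENNReal

lemma shiftMap_iter_coord {E : Type*} {A : E → E → Bool} (ω : Subshift E A)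
    (k j : ℕ) : ((shiftMap^[k]) ω).1 j = ω.1 (j + k) := by
  induction k generalizing j with
  | zero => simp
  | succ k ih =>
    rw [Function.iterate_succ_apply']
    show ((shiftMap^[k]) ω).1 (j + 1) = _
    rw [ih, Nat.add_assoc, Nat.add_comm 1 k]

/-- if `I ≥ 0` and `inf { I ω : ω₁ ≥ ℓ } → ∞` as `ℓ → ∞`, then any family of
shift-invariant Borel probability measures with uniformly bounded `∫ I dμ` is tight. -/
theorem tight_of_bounded_I_integrals (A : ℕ → ℕ → Bool)
    (I : Subshift ℕ A → ℝ) (hI0 : ∀ ω, 0 ≤ I ω) (hImeas : Measurable I)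
    (hblow : ∀ C : ℝ, ∃ ℓ : ℕ, ∀ ω : Subshift ℕ A, ℓ ≤ ω.1 0 → C ≤ I ω)
    (M : Set (Measure (Subshift ℕ A)))
    (hprob : ∀ μ ∈ M, IsProbabilityMeasure μ)
    (hinv : ∀ μ ∈ M, MeasurePreserving shiftMap μ μ)
    (hbdd : ∃ B : ℝ≥0∞, B ≠ ⊤ ∧ ∀ μ ∈ M, ∫⁻ ω, ENNReal.ofReal (I ω) ∂μ ≤ B) :
    ∀ ε : ℝ≥0∞, 0 < ε → ∃ C : Set (Subshift ℕ A), IsCompact C ∧ ∀ μ ∈ M, μ Cᶜ ≤ ε := by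
  intro ε hε
  obtain ⟨B, hBtop, hB⟩ := hbdd
  set ε' : ℝ≥0∞ := min ε 1 with hε'def
  have hε'0 : ε' ≠ 0 := (lt_min hε zero_lt_one).ne'
  have hε'top : ε' ≠ ⊤ := by
    exact ne_top_of_le_ne_top ENNReal.one_ne_top (min_le_right _ _)
  have hε'le : ε' ≤ ε := min_le_left _ _
  -- the weights
  set δ : ℕ → ℝ≥0∞ := fun i => ε' / 2 * (2 : ℝ≥0∞)⁻¹ ^ i with hδdef
  have hδ0 : ∀ i, δ i ≠ 0 := by
    intro i
    simp only [hδdef]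
    refine mul_ne_zero ?_ ?_
    · exact ENNReal.div_ne_zero.mpr ⟨hε'0, ENNReal.ofNat_ne_top⟩
    · exact pow_ne_zero _ (by simp)
  have hδtop : ∀ i, δ i ≠ ⊤ := by
    intro i
    simp only [hδdef, div_eq_mul_inv]
    exact ENNReal.mul_ne_top (ENNReal.mul_ne_top hε'top (by simp))
      (ENNReal.pow_ne_top (by simp))
  have hδsum : ∑' i, δ i = ε' := by
    rw [hδdef, ENNReal.tsum_mul_left, ENNReal.tsum_geometric]
    have h2 : (1 : ℝ≥0∞) - 2⁻¹ = 2⁻¹ := by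
      rw [ENNReal.sub_eq_of_eq_add (by simp)]
      rw [ENNReal.inv_two_add_inv_two]
    rw [h2, inv_inv]
    rw [ENNReal.div_mul_cancel (by norm_num) (by norm_num)]
  -- choose thresholds
  have hchoice : ∀ i : ℕ, ∃ ℓ : ℕ, ∀ ω : Subshift ℕ A,
      ℓ ≤ ω.1 0 → ((B / δ i).toReal + 1) ≤ I ω := fun i => hblow _
  choose ℓ hℓ using hchoice
  -- the compact set
  refine ⟨{ω : Subshift ℕ A | ∀ i, ω.1 i < ℓ i}, ?_, ?_⟩
  · -- compactness
    rw [Topology.IsEmbedding.subtypeVal.isCompact_iff]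
    have hsub : Subtype.val '' {ω : Subshift ℕ A | ∀ i, ω.1 i < ℓ i} ⊆
        Set.pi Set.univ (fun i => Set.Iio (ℓ i)) := by
      rintro f ⟨ω, hω, rfl⟩ i _
      exact hω i
    refine IsCompact.of_isClosed_subset
      (isCompact_univ_pi (fun i => (Set.finite_Iio (ℓ i)).isCompact)) ?_ hsub
    have : Subtype.val '' {ω : Subshift ℕ A | ∀ i, ω.1 i < ℓ i} =
        {f : ℕ → ℕ | ∀ i, A (f i) (f (i + 1)) = true} ∩ {f : ℕ → ℕ | ∀ i, f i < ℓ i} := by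
      ext f
      constructor
      · rintro ⟨ω, hω, rfl⟩; exact ⟨ω.2, hω⟩
      · rintro ⟨h1, h2⟩; exact ⟨⟨f, h1⟩, h2, rfl⟩
    rw [this]
    apply IsClosed.inter
    · have : {f : ℕ → ℕ | ∀ i, A (f i) (f (i + 1)) = true} =
          ⋂ i, (fun f : ℕ → ℕ => (f i, f (i + 1))) ⁻¹' {p : ℕ × ℕ | A p.1 p.2 = true} := by
        ext f; simp [Set.mem_iInter]
      rw [this]
      exact isClosed_iInter fun i =>
        IsClosed.preimage ((continuous_apply i).prodMk (continuous_apply (i + 1)))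
          (isClosed_discrete _)
    · have : {f : ℕ → ℕ | ∀ i, f i < ℓ i} = ⋂ i, (fun f : ℕ → ℕ => f i) ⁻¹' Set.Iio (ℓ i) := by
        ext f; simp [Set.mem_iInter]
      rw [this]
      exact isClosed_iInter fun i =>
        IsClosed.preimage (continuous_apply i) (isClosed_discrete _)
  · -- measure bound
    intro μ hμ
    have hcompl : {ω : Subshift ℕ A | ∀ i, ω.1 i < ℓ i}ᶜ =
        ⋃ i, {ω : Subshift ℕ A | ℓ i ≤ ω.1 i} := by
      ext ω
      simp [not_lt, Set.mem_iUnion, not_forall]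
    rw [hcompl]
    refine le_trans (measure_iUnion_le _) (le_trans ?_ (le_trans hδsum.le hε'le))
    refine ENNReal.tsum_le_tsum fun i => ?_
    -- reduce to coordinate 0 by invariance
    have hmeas0 : MeasurableSet {ω : Subshift ℕ A | ℓ i ≤ ω.1 0} := by
      have : Measurable fun ω : Subshift ℕ A => ω.1 0 :=
        (measurable_pi_apply 0).comp measurable_subtype_coe
      exact this (measurableSet_Ici)
    have hset : {ω : Subshift ℕ A | ℓ i ≤ ω.1 i} =
        (shiftMap^[i]) ⁻¹' {ω : Subshift ℕ A | ℓ i ≤ ω.1 0} := by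
      ext ω
      simp [Set.mem_preimage, shiftMap_iter_coord]
    rw [hset, ((hinv μ hμ).iterate i).measure_preimage hmeas0.nullMeasurableSet]
    -- Chebyshev
    set S := {ω : Subshift ℕ A | ℓ i ≤ ω.1 0}
    set K : ℝ := (B / δ i).toReal + 1 with hKdef
    have hK0 : (0 : ℝ) < K := by positivity
    have hKne0 : ENNReal.ofReal K ≠ 0 := by simp [hK0]
    have hcheb : ENNReal.ofReal K * μ S ≤ B := by
      rw [← setLIntegral_const S (ENNReal.ofReal K)]
      refine le_trans (setLIntegral_mono (hImeas.ennreal_ofReal) ?_)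
        (le_trans (setLIntegral_le_lintegral _ _) (hB μ hμ))
      intro ω hω
      exact ENNReal.ofReal_le_ofReal (hℓ i ω hω)
    have hBle : B ≤ ENNReal.ofReal K * δ i := by
      have hfin : B / δ i ≠ ⊤ := by
        simp [ENNReal.div_eq_top, hBtop, hδ0 i]
      have : B / δ i ≤ ENNReal.ofReal K := by
        conv_lhs => rw [← ENNReal.ofReal_toReal hfin]
        exact ENNReal.ofReal_le_ofReal (by simp [hKdef])
      calc B = B / δ i * δ i := by
              rw [ENNReal.div_mul_cancel (hδ0 i) (hδtop i)]
           _ ≤ ENNReal.ofReal K * δ i := mul_le_mul_left this _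
    exact (ENNReal.mul_le_mul_iff_right hKne0 ENNReal.ofReal_ne_top).mp (hcheb.trans hBle)
end

section
/- Let I : ℕ^ℕ → ℝ be the function I(ω) := 2 log(ω_1 + 2), depending only on the first coordinate. Then there exist σ-invariant Borel probability measures μ, μ_1, μ_2, … on the full shift ℕ^ℕ such that μ_n converges weakly to μ, ∫ I dμ < ∞ and ∫ I dμ_n < ∞ for all n, and nevertheless liminf_{n→∞} ∫ I dμ_n > ∫ I dμ. In particular, the map ν ↦ ∫ I dν on σ-invariant probability measures is not continuous with respect to weak convergence. -/
open MeasureTheory Filter Topology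
open scoped ENNReal BoundedContinuousFunction

/-- The left shift on the full shift space `ℕ^ℕ`. -/
def fullShift (ω : ℕ → ℕ) : ℕ → ℕ := fun i => ω (i + 1)

lemma fullShift_measurable : Measurable fullShift :=
  measurable_pi_lambda _ (fun i => measurable_pi_apply (i + 1))

noncomputable def kkAux (n : ℕ) : ℕ := ⌈Real.exp (n + 1)⌉₊

lemma kkAux_log (n : ℕ) : (n : ℝ) + 1 ≤ Real.log ((kkAux n : ℝ) + 2) := by
  have h1 : Real.exp (n + 1) ≤ (kkAux n : ℝ) + 2 := by
    have := Nat.le_ceil (Real.exp (n + 1))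
    unfold kkAux; linarith
  calc (n : ℝ) + 1 = Real.log (Real.exp (n + 1)) := (Real.log_exp _).symm
    _ ≤ Real.log ((kkAux n : ℝ) + 2) :=
        Real.log_le_log (Real.exp_pos _) h1

/-- for `I(ω) = 2 log(ω₁ + 2)` there are shift-invariant Borel probability
measures `μ_n → μ` weakly, all with `∫ I dμ_n, ∫ I dμ < ∞`, but
`liminf_n ∫ I dμ_n > ∫ I dμ`; in particular `ν ↦ ∫ I dν` is not weakly continuous. -/
theorem I_integral_not_weakly_continuous
    (I : (ℕ → ℕ) → ℝ) (hI : ∀ ω, I ω = 2 * Real.log ((ω 0 : ℝ) + 2)) :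
    ∃ (μ : Measure (ℕ → ℕ)) (μs : ℕ → Measure (ℕ → ℕ)),
      IsProbabilityMeasure μ ∧ (∀ n, IsProbabilityMeasure (μs n)) ∧
      MeasurePreserving fullShift μ μ ∧
      (∀ n, MeasurePreserving fullShift (μs n) (μs n)) ∧
      (∀ f : (ℕ → ℕ) →ᵇ ℝ,
        Tendsto (fun n => ∫ ω, f ω ∂(μs n)) atTop (𝓝 (∫ ω, f ω ∂μ))) ∧
      (∫⁻ ω, ENNReal.ofReal (I ω) ∂μ < ⊤) ∧
      (∀ n, ∫⁻ ω, ENNReal.ofReal (I ω) ∂(μs n) < ⊤) ∧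
      ∫⁻ ω, ENNReal.ofReal (I ω) ∂μ <
        liminf (fun n => ∫⁻ ω, ENNReal.ofReal (I ω) ∂(μs n)) atTop := by
  classical
  set z0 : ℕ → ℕ := fun _ => 0 with hz0
  set c : ℕ → (ℕ → ℕ) := fun n _ => kkAux n with hc
  set a : ℕ → ℝ≥0∞ := fun n => ((n : ℝ≥0∞) + 1)⁻¹ with ha
  have ha_ne_top : ∀ n, a n ≠ ⊤ := fun n => by
    simp [ha, ENNReal.inv_ne_top]
  have ha_le_one : ∀ n, a n ≤ 1 := fun n =>
    ENNReal.inv_le_one.mpr le_add_self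
  have hshift0 : fullShift z0 = z0 := rfl
  have hshiftc : ∀ n, fullShift (c n) = c n := fun n => rfl
  set μ : Measure (ℕ → ℕ) := Measure.dirac z0 with hμ
  set μs : ℕ → Measure (ℕ → ℕ) :=
    fun n => (1 - a n) • Measure.dirac z0 + a n • Measure.dirac (c n) with hμs
  have hlint : ∀ (g : (ℕ → ℕ) → ℝ≥0∞) (n : ℕ),
      ∫⁻ ω, g ω ∂(μs n) = (1 - a n) * g z0 + a n * g (c n) := by
    intro g n
    simp [hμs, lintegral_add_measure, lintegral_smul_measure, lintegral_dirac]
  have hInt : ∀ n, ∫⁻ ω, ENNReal.ofReal (I ω) ∂(μs n)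
      = (1 - a n) * ENNReal.ofReal (2 * Real.log 2)
        + a n * ENNReal.ofReal (2 * Real.log ((kkAux n : ℝ) + 2)) := by
    intro n
    rw [hlint]
    congr 2
    · rw [hI]; norm_num
    · rw [hI]
  refine ⟨μ, μs, ?_, ?_, ?_, ?_, ?_, ?_, ?_, ?_⟩
  · exact Measure.dirac.isProbabilityMeasure
  · intro n
    constructor
    simp [hμs, Measure.add_apply, Measure.smul_apply, tsub_add_cancel_of_le (ha_le_one n)]
  · exact ⟨fullShift_measurable, by
      rw [hμ, Measure.map_dirac' fullShift_measurable, hshift0]⟩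
  · intro n
    refine ⟨fullShift_measurable, ?_⟩
    rw [hμs]
    simp only
    rw [Measure.map_add _ _ fullShift_measurable, Measure.map_smul, Measure.map_smul,
      Measure.map_dirac' fullShift_measurable, Measure.map_dirac' fullShift_measurable,
      hshift0, hshiftc]
  · intro f
    have hi1 : ∀ n, ∫ ω, f ω ∂(μs n)
        = (1 - a n).toReal * f z0 + (a n).toReal * f (c n) := by
      intro n
      have h1 : IsFiniteMeasure ((1 - a n) • Measure.dirac z0 : Measure (ℕ → ℕ)) := by
        constructor
        simp [Measure.smul_apply]
        exact lt_of_le_of_lt (by simpa using tsub_le_self (a := (1:ℝ≥0∞)) (b := a n))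
          ENNReal.one_lt_top
      have h2 : IsFiniteMeasure (a n • Measure.dirac (c n) : Measure (ℕ → ℕ)) := by
        constructor
        simp [Measure.smul_apply]
        exact lt_of_le_of_lt (ha_le_one n) ENNReal.one_lt_top
      rw [hμs]
      simp only
      rw [integral_add_measure (f.integrable _) (f.integrable _),
        integral_smul_measure, integral_smul_measure, integral_dirac, integral_dirac]
      simp
    have hi0 : ∫ ω, f ω ∂μ = f z0 := by rw [hμ, integral_dirac]
    rw [hi0]
    simp only [hi1]
    have hr : Tendsto (fun n => (a n).toReal) atTop (𝓝 0) := by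
      have : (fun n => (a n).toReal) = fun n : ℕ => 1 / ((n : ℝ) + 1) := by
        funext n
        rw [ha]
        simp only [one_div]
        rw [ENNReal.toReal_inv, ENNReal.toReal_add (by simp) (by simp),
          ENNReal.toReal_natCast, ENNReal.toReal_one]
      rw [this]
      exact tendsto_one_div_add_atTop_nhds_zero_nat
    have h1r : ∀ n, (1 - a n).toReal = 1 - (a n).toReal := by
      intro n
      rw [ENNReal.toReal_sub_of_le (ha_le_one n) ENNReal.one_ne_top, ENNReal.toReal_one]
    have hA : Tendsto (fun n => (1 - a n).toReal * f z0) atTop (𝓝 (f z0)) := by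
      have : Tendsto (fun n => (1 - (a n).toReal) * f z0) atTop (𝓝 ((1 - 0) * f z0)) :=
        (((tendsto_const_nhds (x := (1:ℝ))).sub hr).mul tendsto_const_nhds)
      simp only [h1r]
      simpa using this
    have hB : Tendsto (fun n => (a n).toReal * f (c n)) atTop (𝓝 0) := by
      apply squeeze_zero_norm (a := fun n => (a n).toReal * ‖f‖) ?_ ?_
      · intro n
        calc ‖(a n).toReal * f (c n)‖ = ‖(a n).toReal‖ * ‖f (c n)‖ := norm_mul _ _
          _ ≤ (a n).toReal * ‖f‖ := by
              rw [Real.norm_eq_abs, abs_of_nonneg ENNReal.toReal_nonneg]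
              exact mul_le_mul_of_nonneg_left (f.norm_coe_le_norm _) ENNReal.toReal_nonneg
      · simpa using hr.mul (tendsto_const_nhds (x := ‖f‖))
    simpa using hA.add hB
  · rw [hμ, lintegral_dirac]
    exact ENNReal.ofReal_lt_top
  · intro n
    rw [hInt n]
    exact ENNReal.add_lt_top.mpr ⟨ENNReal.mul_lt_top
        (lt_of_le_of_lt (by simpa using tsub_le_self (a := (1:ℝ≥0∞)) (b := a n))
          ENNReal.one_lt_top) ENNReal.ofReal_lt_top,
      ENNReal.mul_lt_top (lt_of_le_of_lt (ha_le_one n) ENNReal.one_lt_top)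
        ENNReal.ofReal_lt_top⟩
  · have hμval : ∫⁻ ω, ENNReal.ofReal (I ω) ∂μ = ENNReal.ofReal (2 * Real.log 2) := by
      rw [hμ, lintegral_dirac, hI]
      norm_num
    have hlb : ∀ n, (2 : ℝ≥0∞) ≤ ∫⁻ ω, ENNReal.ofReal (I ω) ∂(μs n) := by
      intro n
      rw [hInt n]
      have h2 : ENNReal.ofReal (2 * ((n : ℝ) + 1))
          ≤ ENNReal.ofReal (2 * Real.log ((kkAux n : ℝ) + 2)) :=
        ENNReal.ofReal_le_ofReal (by nlinarith [kkAux_log n])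
      have h3 : a n * ENNReal.ofReal (2 * ((n : ℝ) + 1)) = 2 := by
        have he : ENNReal.ofReal (2 * ((n : ℝ) + 1)) = 2 * ((n : ℝ≥0∞) + 1) := by
          rw [ENNReal.ofReal_mul (by norm_num), ENNReal.ofReal_add (by positivity) (by norm_num)]
          simp
        rw [he, ha]
        simp only
        rw [← mul_assoc, mul_comm (((n : ℝ≥0∞) + 1)⁻¹) 2, mul_assoc,
          ENNReal.inv_mul_cancel (by simp) (by simp),
          mul_one]
      calc (2 : ℝ≥0∞) = a n * ENNReal.ofReal (2 * ((n : ℝ) + 1)) := h3.symm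
        _ ≤ a n * ENNReal.ofReal (2 * Real.log ((kkAux n : ℝ) + 2)) :=
            mul_le_mul_right h2 _
        _ ≤ _ := le_add_self
    have hliminf : (2 : ℝ≥0∞) ≤ liminf
        (fun n => ∫⁻ ω, ENNReal.ofReal (I ω) ∂(μs n)) atTop :=
      le_liminf_of_le (by isBoundedDefault) (Eventually.of_forall hlb)
    refine lt_of_lt_of_le ?_ hliminf
    rw [hμval]
    have : (2 : ℝ≥0∞) = ENNReal.ofReal 2 := by norm_num
    rw [this]
    apply ENNReal.ofReal_lt_ofReal_iff_of_nonneg (by positivity) |>.mpr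
    nlinarith [Real.log_two_lt_d9]
end
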